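/- Regime-specific local Markov property: in a causally sufficient, solvable, weakly regime-acyclic SCM with regime indicator R and regime value r, for any variable Y with Y ≠ R, Y not on a directed cycle of the descriptive graph G_descr(r), and Y not a union-graph ancestor of R, the set B = Pa_descr(r)(Y) ∪ {R} is an r-barrier: Y ⫫ η_C | B − {R}, R = r for every set C of variables not containing Y. -/
import Mathlib


open scoped Classical

noncomputable def pr {Ω : Type*} [Fintype Ω] (P : Ω → ℝ) (A : Set Ω) : ℝ :=
  ∑ ω, if ω ∈ A then P ω else 0

noncomputable def cpr {Ω : Type*} [Fintype Ω] (P : Ω → ℝ) (A B : Set Ω) : ℝ :=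
  pr P (A ∩ B) / pr P B

/-- Independence of a coordinate event from an update-invariant event, for a
product measure. -/
lemma indep_aux {ι : Type*} [Fintype ι] [DecidableEq ι]
    (Noise : ι → Type*) [∀ j, Fintype (Noise j)]
    (p : ∀ j, Noise j → ℝ) (P : (∀ j, Noise j) → ℝ)
    (hP : ∀ η : ∀ j, Noise j, P η = ∏ j, p j (η j))
    (Y : ι) (hsumY : ∑ n, p Y n = 1)
    (T : Set (Noise Y)) (W : Set (∀ j, Noise j))
    (hW : ∀ (η : ∀ j, Noise j) (n : Noise Y), η ∈ W → Function.update η Y n ∈ W) :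
    pr P ({η | η Y ∈ T} ∩ W)
      = (∑ n, if n ∈ T then p Y n else 0) * pr P W := by
  classical
  have hWiff : ∀ (η : ∀ j, Noise j) (n : Noise Y),
      Function.update η Y n ∈ W ↔ η ∈ W := by
    intro η n
    constructor
    · intro h
      have := hW _ (η Y) h
      rwa [Function.update_idem, Function.update_eq_self] at this
    · exact hW η n
  have hkey : ∀ (η : ∀ j, Noise j) (n : Noise Y),
      p Y (η Y) * P (Function.update η Y n) = p Y n * P η := by
    intro η n
    rw [hP, hP,
      ← Finset.mul_prod_erase Finset.univ (fun j => p j (Function.update η Y n j))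
        (Finset.mem_univ Y),
      ← Finset.mul_prod_erase Finset.univ (fun j => p j (η j)) (Finset.mem_univ Y)]
    have h1 : ∏ j ∈ Finset.univ.erase Y, p j (Function.update η Y n j)
        = ∏ j ∈ Finset.univ.erase Y, p j (η j) :=
      Finset.prod_congr rfl fun j hj => by
        rw [Function.update_of_ne (Finset.ne_of_mem_erase hj)]
    rw [Function.update_self, h1]
    ring
  have expand1 : pr P ({η | η Y ∈ T} ∩ W)
      = ∑ q : Noise Y × (∀ j, Noise j),
          if q.2 Y ∈ T ∧ q.2 ∈ W then p Y q.1 * P q.2 else 0 := by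
    rw [Fintype.sum_prod_type_right]
    unfold pr
    refine Finset.sum_congr rfl fun η _ => ?_
    by_cases h : η Y ∈ T ∧ η ∈ W
    · have hmem : η ∈ {η : ∀ j, Noise j | η Y ∈ T} ∩ W := h
      simp only [hmem, if_pos, h, if_true, and_self, ← Finset.sum_mul, hsumY, one_mul]
    · have hmem : η ∉ {η : ∀ j, Noise j | η Y ∈ T} ∩ W := h
      simp [hmem, h]
  have expand2 : (∑ n, if n ∈ T then p Y n else 0) * pr P W
      = ∑ q : Noise Y × (∀ j, Noise j),
          if q.1 ∈ T ∧ q.2 ∈ W then p Y q.1 * P q.2 else 0 := by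
    unfold pr
    rw [Fintype.sum_mul_sum, Fintype.sum_prod_type]
    refine Finset.sum_congr rfl fun n _ => Finset.sum_congr rfl fun η _ => ?_
    by_cases h1 : n ∈ T <;> by_cases h2 : η ∈ W <;> simp [h1, h2]
  -- the involutive reindexing
  let Φ : (Noise Y × (∀ j, Noise j)) ≃ (Noise Y × (∀ j, Noise j)) :=
    { toFun := fun q => (q.2 Y, Function.update q.2 Y q.1)
      invFun := fun q => (q.2 Y, Function.update q.2 Y q.1)
      left_inv := fun q => by
        simp [Function.update_self, Function.update_idem, Function.update_eq_self]
      right_inv := fun q => by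
        simp [Function.update_self, Function.update_idem, Function.update_eq_self] }
  rw [expand1, expand2]
  rw [← Equiv.sum_comp Φ
    (fun q : Noise Y × (∀ j, Noise j) =>
      if q.1 ∈ T ∧ q.2 ∈ W then p Y q.1 * P q.2 else 0)]
  refine Finset.sum_congr rfl fun q _ => ?_
  show (if q.2 Y ∈ T ∧ q.2 ∈ W then p Y q.1 * P q.2 else 0)
    = if q.2 Y ∈ T ∧ Function.update q.2 Y q.1 ∈ W
      then p Y (q.2 Y) * P (Function.update q.2 Y q.1) else 0
  rw [hWiff q.2 q.1]
  by_cases h : q.2 Y ∈ T ∧ q.2 ∈ W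
  · rw [if_pos h, if_pos h]
    exact (hkey q.2 q.1).symm
  · rw [if_neg h, if_neg h]

/-- regime-specific local Markov property. In a causally sufficient,
solvable, weakly regime-acyclic SCM, for `Y ≠ R` not on a directed cycle of the
descriptive graph `G_descr(r)` and not a union-graph ancestor of `R`, the set
`B = Pa_descr(r)(Y) ∪ {R}` is an `r`-barrier: `Y ⫫ η_C | B − {R}, R = r` for every
set `C` of variables with `Y ∉ C`. -/
theorem stmt_10 {ι : Type*} [Fintype ι] [DecidableEq ι]
    (Val : ι → Type*) (Noise : ι → Type*) [∀ j, Fintype (Noise j)]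
    (p : ∀ j, Noise j → ℝ)
    (hpos : ∀ (j : ι) (n : Noise j), 0 ≤ p j n) (hsump : ∀ j : ι, ∑ n, p j n = 1)
    (P : (∀ j, Noise j) → ℝ)
    (hP : ∀ η : ∀ j, Noise j, P η = ∏ j, p j (η j))  -- causal sufficiency
    (PaU PaD : ι → Set ι)  -- union parents, descriptive parents for regime r
    (R : ι) (r : Val R)
    (F : ∀ i : ι, (∀ j, Noise j) → Val i)
    (hancU : ∀ (i : ι) (η η' : ∀ j, Noise j),  -- solvability (union graph)
      (∀ j : ι, Relation.ReflTransGen (fun a b => a ∈ PaU b) j i → η j = η' j) →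
      F i η = F i η')
    (hancD : ∀ (i : ι) (η η' : ∀ j, Noise j),  -- weak regime-acyclicity (regime r)
      F R η = r → F R η' = r →
      (∀ j : ι, Relation.ReflTransGen (fun a b => a ∈ PaD b) j i → η j = η' j) →
      F i η = F i η')
    (Y : ι) (hYR : Y ≠ R)
    -- conditionally on R = r, Y a.s. equals a mechanism of its descriptive parents and η_Y
    (g : (∀ j, Val j) → Noise Y → Val Y)
    (hgdep : ∀ (v v' : ∀ j, Val j) (n : Noise Y), (∀ j ∈ PaD Y, v j = v' j) → g v n = g v' n)
    (hgfix : ∀ η : ∀ j, Noise j, F R η = r → F Y η = g (fun j => F j η) (η Y))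
    (hnocyc : ¬ Relation.TransGen (fun a b => a ∈ PaD b) Y Y)
    (hnotanc : ¬ Relation.ReflTransGen (fun a b => a ∈ PaU b) Y R) :
    ∀ C : Set ι, Y ∉ C →
      ∀ (b : ∀ j, Val j) (y : Val Y) (c : ∀ j, Noise j),
        pr P {η | F R η = r ∧ ∀ j ∈ PaD Y, F j η = b j} ≠ 0 →
        cpr P ({η | F Y η = y} ∩ {η | ∀ j ∈ C, η j = c j})
            {η | F R η = r ∧ ∀ j ∈ PaD Y, F j η = b j}
          = cpr P {η | F Y η = y} {η | F R η = r ∧ ∀ j ∈ PaD Y, F j η = b j}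
            * cpr P {η | ∀ j ∈ C, η j = c j} {η | F R η = r ∧ ∀ j ∈ PaD Y, F j η = b j} := by
  classical
  intro C hYC b y c hS0
  set S : Set (∀ j, Noise j) := {η | F R η = r ∧ ∀ j ∈ PaD Y, F j η = b j} with hSdef
  set E : Set (∀ j, Noise j) := {η | ∀ j ∈ C, η j = c j} with hEdef
  set A : Set (∀ j, Noise j) := {η | F Y η = y} with hAdef
  set T : Set (Noise Y) := {n | g b n = y} with hTdef
  -- F R is insensitive to the Y coordinate
  have hFRupd : ∀ (η : ∀ j, Noise j) (n : Noise Y),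
      F R (Function.update η Y n) = F R η := by
    intro η n
    apply hancU
    intro j hj
    have hjY : j ≠ Y := by rintro rfl; exact hnotanc hj
    rw [Function.update_of_ne hjY]
  -- S is invariant under updating the Y coordinate
  have hSupd : ∀ (η : ∀ j, Noise j) (n : Noise Y), η ∈ S → Function.update η Y n ∈ S := by
    rintro η n ⟨hR, hb⟩
    have hR' : F R (Function.update η Y n) = r := (hFRupd η n).trans hR
    refine ⟨hR', fun j hj => ?_⟩
    have hFj : F j (Function.update η Y n) = F j η := by
      apply hancD j _ _ hR' hR
      intro k hk
      have hkY : k ≠ Y := by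
        rintro rfl
        exact hnocyc (Relation.TransGen.tail' hk hj)
      rw [Function.update_of_ne hkY]
    rw [hFj]; exact hb j hj
  -- E is invariant under updating the Y coordinate
  have hEupd : ∀ (η : ∀ j, Noise j) (n : Noise Y), η ∈ E → Function.update η Y n ∈ E := by
    intro η n hη j hj
    have hjY : j ≠ Y := by rintro rfl; exact hYC hj
    rw [Function.update_of_ne hjY]; exact hη j hj
  have hESupd : ∀ (η : ∀ j, Noise j) (n : Noise Y),
      η ∈ E ∩ S → Function.update η Y n ∈ E ∩ S := fun η n h =>
    ⟨hEupd η n h.1, hSupd η n h.2⟩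
  -- on S, the event A is the coordinate event {η Y ∈ T}
  have hAY : ∀ η ∈ S, (F Y η = y ↔ η Y ∈ T) := by
    rintro η ⟨hR, hb⟩
    have : F Y η = g b (η Y) := by
      rw [hgfix η hR]
      exact hgdep _ _ _ fun j hj => hb j hj
    rw [this]; exact Iff.rfl
  have hset1 : (A ∩ E) ∩ S = {η | η Y ∈ T} ∩ (E ∩ S) := by
    ext η
    constructor
    · rintro ⟨⟨hA, hE⟩, hS⟩
      exact ⟨(hAY η hS).1 hA, hE, hS⟩
    · rintro ⟨hT, hE, hS⟩
      exact ⟨⟨(hAY η hS).2 hT, hE⟩, hS⟩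
  have hset2 : A ∩ S = {η | η Y ∈ T} ∩ S := by
    ext η
    constructor
    · rintro ⟨hA, hS⟩; exact ⟨(hAY η hS).1 hA, hS⟩
    · rintro ⟨hT, hS⟩; exact ⟨(hAY η hS).2 hT, hS⟩
  have h1 : pr P ((A ∩ E) ∩ S) = (∑ n, if n ∈ T then p Y n else 0) * pr P (E ∩ S) := by
    rw [hset1]
    exact indep_aux Noise p P hP Y (hsump Y) T (E ∩ S) hESupd
  have h2 : pr P (A ∩ S) = (∑ n, if n ∈ T then p Y n else 0) * pr P S := by
    rw [hset2]
    exact indep_aux Noise p P hP Y (hsump Y) T S hSupd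
  unfold cpr
  rw [h1, h2]
  field_simp
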